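/- Let m, n ≥ 1 with m + n ≤ d, and let G = K_d − K_{m,n} be the graph on [d] obtained from the complete graph by deleting the edges of a complete bipartite graph K_{m,n}. Then ε(G) − ε(K_d) = (1/2)mn(m+n−6)d − (1/4)mn(3mn + 2m² + 2n² − 5m − 5n − 13). -/

import Mathlib

open Finset SimpleGraph

/-- A 4-cycle exists within the vertex set `s` of the graph `G`. -/
def fourCycleOn {V : Type*} (G : SimpleGraph V) (s : Set V) : Prop :=
  ∃ a b c d, a ∈ s ∧ b ∈ s ∧ c ∈ s ∧ d ∈ s ∧
    a ≠ b ∧ a ≠ c ∧ a ≠ d ∧ b ≠ c ∧ b ≠ d ∧ c ≠ d ∧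
    G.Adj a b ∧ G.Adj b c ∧ G.Adj c d ∧ G.Adj d a

/-- The pair of edges `{e,f}` spans an edge of the edge polytope: they share a
vertex, or they are disjoint and the induced subgraph on their endpoints has no 4-cycle. -/
def epPair {V : Type*} (G : SimpleGraph V) (e f : Sym2 V) : Prop :=
  (∃ v, v ∈ e ∧ v ∈ f) ∨
  ((¬ ∃ v, v ∈ e ∧ v ∈ f) ∧ ¬ fourCycleOn G {v | v ∈ e ∨ v ∈ f})

open scoped Classical in
/-- The number of edges (1-dimensional faces) of the edge polytope of `G`:
the number of unordered pairs of distinct edges satisfying `epPair`. -/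
noncomputable def epsilon {V : Type*} [Fintype V] (G : SimpleGraph V) : ℕ :=
  ((G.edgeFinset.powersetCard 2).filter
    (fun s => ∀ e ∈ s, ∀ f ∈ s, e ≠ f → epPair G e f)).card

open scoped Classical in
/-- number of 4-subsets inducing a path of length 3. -/
noncomputable def aCount {V : Type*} [Fintype V] (H : SimpleGraph V) : ℕ :=
  ((univ.powersetCard 4).filter (fun s => ∃ a b c d : V,
    s = {a, b, c, d} ∧ a ≠ b ∧ a ≠ c ∧ a ≠ d ∧ b ≠ c ∧ b ≠ d ∧ c ≠ d ∧
    H.Adj a b ∧ H.Adj b c ∧ H.Adj c d ∧ ¬H.Adj a c ∧ ¬H.Adj a d ∧ ¬H.Adj b d)).card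

open scoped Classical in
/-- number of 4-subsets inducing a cycle of length 4. -/
noncomputable def bCount {V : Type*} [Fintype V] (H : SimpleGraph V) : ℕ :=
  ((univ.powersetCard 4).filter (fun s => ∃ a b c d : V,
    s = {a, b, c, d} ∧ a ≠ b ∧ a ≠ c ∧ a ≠ d ∧ b ≠ c ∧ b ≠ d ∧ c ≠ d ∧
    H.Adj a b ∧ H.Adj b c ∧ H.Adj c d ∧ H.Adj d a ∧ ¬H.Adj a c ∧ ¬H.Adj b d)).card

open scoped Classical in
/-- number of 4-subsets inducing a path of length 2 plus an isolated vertex. -/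
noncomputable def cCount {V : Type*} [Fintype V] (H : SimpleGraph V) : ℕ :=
  ((univ.powersetCard 4).filter (fun s => ∃ a b c d : V,
    s = {a, b, c, d} ∧ a ≠ b ∧ a ≠ c ∧ a ≠ d ∧ b ≠ c ∧ b ≠ d ∧ c ≠ d ∧
    H.Adj a b ∧ H.Adj b c ∧ ¬H.Adj a c ∧ ¬H.Adj a d ∧ ¬H.Adj b d ∧ ¬H.Adj c d)).card

open scoped Classical in
/-- the number of triangles of `H`. -/
noncomputable def k3 {V : Type*} [Fintype V] (H : SimpleGraph V) : ℕ :=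
  ((univ.powersetCard 3).filter (fun s => ∀ i ∈ s, ∀ j ∈ s, i ≠ j → H.Adj i j)).card

open scoped Classical in
/-- the number of 3-subsets inducing a path with exactly two edges. -/
noncomputable def psi {V : Type*} [Fintype V] (H : SimpleGraph V) : ℕ :=
  ((univ.powersetCard 3).filter (fun s => ∃ a b c : V,
    s = {a, b, c} ∧ a ≠ b ∧ a ≠ c ∧ b ≠ c ∧ H.Adj a b ∧ H.Adj b c ∧ ¬H.Adj a c)).card

/-- the complete bipartite graph `K_{m,n}` on the vertex set `[d]`, with parts
`{0,…,m-1}` and `{m,…,m+n-1}`. -/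
def bip (d m n : ℕ) : SimpleGraph (Fin d) where
  Adj i j := ((i : ℕ) < m ∧ m ≤ (j : ℕ) ∧ (j : ℕ) < m + n) ∨
    ((j : ℕ) < m ∧ m ≤ (i : ℕ) ∧ (i : ℕ) < m + n)
  symm := by constructor; intro i j h; tauto
  loopless := by constructor; intro i h; omega

/-- the copy of `H` on the first `r` vertices of `[d]`. -/
def embedGraph {r : ℕ} (H : SimpleGraph (Fin r)) (d : ℕ) : SimpleGraph (Fin d) where
  Adj i j := ∃ (hi : (i : ℕ) < r) (hj : (j : ℕ) < r), H.Adj ⟨i, hi⟩ ⟨j, hj⟩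
  symm := by constructor; rintro i j ⟨hi, hj, h⟩; exact ⟨hj, hi, h.symm⟩
  loopless := by constructor; rintro i ⟨hi, hj, h⟩; exact H.irrefl h

/-- the subgraph of `H` consisting of the edges in the connected component `c`. -/
def compGraph {V : Type*} (H : SimpleGraph V) (c : H.ConnectedComponent) :
    SimpleGraph V where
  Adj i j := H.Adj i j ∧ H.connectedComponentMk i = c
  symm := by
    constructor
    rintro i j ⟨h, hc⟩
    exact ⟨h.symm, (SimpleGraph.ConnectedComponent.sound h.symm.reachable).trans hc⟩
  loopless := by constructor; rintro i ⟨h, _⟩; exact H.irrefl h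

open scoped Classical in
/-- `|X_{i,j}|`: the number of vertices (other than `i, j`) adjacent to `i` but not `j`. -/
noncomputable def cardX {V : Type*} [Fintype V] (H : SimpleGraph V) (i j : V) : ℕ :=
  (univ.filter (fun ℓ => ℓ ≠ i ∧ ℓ ≠ j ∧ H.Adj i ℓ ∧ ¬ H.Adj j ℓ)).card


section Aux

variable {V : Type*}

lemma epPair_comm {G : SimpleGraph V} {e f : Sym2 V} : epPair G e f ↔ epPair G f e := by
  have h2 : {v | v ∈ e ∨ v ∈ f} = {v | v ∈ f ∨ v ∈ e} := by ext v; simp [or_comm]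
  unfold epPair
  rw [h2]
  constructor <;> (rintro (⟨v, h1, h2⟩ | ⟨h1, h2⟩); · exact Or.inl ⟨v, h2, h1⟩
                   · exact Or.inr ⟨fun ⟨v, hv1, hv2⟩ => h1 ⟨v, hv2, hv1⟩, h2⟩)

lemma fourCycleOn_quad (G : SimpleGraph V) {a b c d : V}
    (hab : a ≠ b) (hac : a ≠ c) (had : a ≠ d) (hbc : b ≠ c) (hbd : b ≠ d) (hcd : c ≠ d) :
    fourCycleOn G {a, b, c, d} ↔
      (G.Adj a b ∧ G.Adj b c ∧ G.Adj c d ∧ G.Adj d a) ∨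
      (G.Adj a b ∧ G.Adj b d ∧ G.Adj d c ∧ G.Adj c a) ∨
      (G.Adj a c ∧ G.Adj c b ∧ G.Adj b d ∧ G.Adj d a) := by
  constructor
  · rintro ⟨w, x, y, z, hw, hx, hy, hz, hwx, hwy, hwz, hxy, hxz, hyz, a1, a2, a3, a4⟩
    simp only [Set.mem_insert_iff, Set.mem_singleton_iff] at hw hx hy hz
    rcases hw with rfl|rfl|rfl|rfl <;> rcases hx with rfl|rfl|rfl|rfl <;>
      rcases hy with rfl|rfl|rfl|rfl <;> rcases hz with rfl|rfl|rfl|rfl <;>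
      first
        | exact absurd rfl (by assumption)
        | (refine Or.inl ⟨?_, ?_, ?_, ?_⟩ <;> first | assumption | exact SimpleGraph.Adj.symm ‹_›)
        | (refine Or.inr (Or.inl ⟨?_, ?_, ?_, ?_⟩) <;>
            first | assumption | exact SimpleGraph.Adj.symm ‹_›)
        | (refine Or.inr (Or.inr ⟨?_, ?_, ?_, ?_⟩) <;>
            first | assumption | exact SimpleGraph.Adj.symm ‹_›)
  · rintro (⟨h1, h2, h3, h4⟩ | ⟨h1, h2, h3, h4⟩ | ⟨h1, h2, h3, h4⟩)
    · exact ⟨a, b, c, d, by simp, by simp, by simp, by simp,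
        hab, hac, had, hbc, hbd, hcd, h1, h2, h3, h4⟩
    · exact ⟨a, b, d, c, by simp, by simp, by simp, by simp,
        hab, had, hac, hbd, hbc, hcd.symm, h1, h2, h3, h4⟩
    · exact ⟨a, c, b, d, by simp, by simp, by simp, by simp,
        hac, hab, had, hbc.symm, hcd, hbd, h1, h2, h3, h4⟩

lemma matching_cases [DecidableEq V] {a b c d x y u v : V}
    (hxy : x ≠ y) (hxu : x ≠ u) (hxv : x ≠ v) (hyu : y ≠ u) (hyv : y ≠ v) (huv : u ≠ v)
    (h : ({x, y, u, v} : Finset V) = {a, b, c, d}) :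
    ({s(x,y), s(u,v)} : Finset (Sym2 V)) = {s(a,b), s(c,d)} ∨
    ({s(x,y), s(u,v)} : Finset (Sym2 V)) = {s(a,c), s(b,d)} ∨
    ({s(x,y), s(u,v)} : Finset (Sym2 V)) = {s(a,d), s(b,c)} := by
  have hx : x = a ∨ x = b ∨ x = c ∨ x = d := by
    have := h ▸ (Finset.mem_insert_self x {y,u,v}); simpa using this
  have hy : y = a ∨ y = b ∨ y = c ∨ y = d := by
    have : y ∈ ({x,y,u,v} : Finset V) := by simp
    have := h ▸ this; simpa using this
  have hu : u = a ∨ u = b ∨ u = c ∨ u = d := by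
    have : u ∈ ({x,y,u,v} : Finset V) := by simp
    have := h ▸ this; simpa using this
  have hv : v = a ∨ v = b ∨ v = c ∨ v = d := by
    have : v ∈ ({x,y,u,v} : Finset V) := by simp
    have := h ▸ this; simpa using this
  rcases hx with rfl|rfl|rfl|rfl <;> rcases hy with rfl|rfl|rfl|rfl <;>
    rcases hu with rfl|rfl|rfl|rfl <;> rcases hv with rfl|rfl|rfl|rfl <;>
    first
      | exact absurd rfl (by assumption)
      | (left; (first | rfl | simp only [Sym2.eq_swap, Finset.pair_comm]); done)
      | (right; left; (first | rfl | simp only [Sym2.eq_swap, Finset.pair_comm]); done)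
      | (right; right; (first | rfl | simp only [Sym2.eq_swap, Finset.pair_comm]); done)

end Aux

section Aux2

variable {V : Type*} [Fintype V] [DecidableEq V]

open scoped Classical in
noncomputable def endpts (s : Finset (Sym2 V)) : Finset V :=
  Finset.univ.filter (fun v => ∃ e ∈ s, v ∈ e)

open scoped Classical in
lemma endpts_pair (x y u v : V) :
    endpts ({s(x,y), s(u,v)} : Finset (Sym2 V)) = {x, y, u, v} := by
  ext w
  simp only [endpts, Finset.mem_filter, Finset.mem_univ, true_and, Finset.mem_insert,
    Finset.mem_singleton, Sym2.mem_iff]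
  constructor
  · rintro ⟨e, (rfl | rfl), h⟩ <;> simp only [Sym2.mem_iff] at h <;> tauto
  · rintro (rfl | rfl | rfl | rfl)
    · exact ⟨s(w,y), Or.inl rfl, by simp⟩
    · exact ⟨s(x,w), Or.inl rfl, by simp⟩
    · exact ⟨s(w,v), Or.inr rfl, by simp⟩
    · exact ⟨s(u,w), Or.inr rfl, by simp⟩

open scoped Classical in
noncomputable def badset (G : SimpleGraph V) : Finset (Finset (Sym2 V)) :=
  (G.edgeFinset.powersetCard 2).filter
    (fun s => ¬ ∀ e ∈ s, ∀ f ∈ s, e ≠ f → epPair G e f)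

lemma epsilon_add_badset (G : SimpleGraph V) [Fintype G.edgeSet] :
    epsilon G + (badset G).card = (G.edgeFinset.card).choose 2 := by
  classical
  rw [epsilon, badset, Finset.card_filter_add_card_filter_not,
    Finset.card_powersetCard]
  congr!

lemma card_four {a b c d : V} [DecidableEq V]
    (hab : a ≠ b) (hac : a ≠ c) (had : a ≠ d) (hbc : b ≠ c) (hbd : b ≠ d) (hcd : c ≠ d) :
    ({a, b, c, d} : Finset V).card = 4 := by
  rw [Finset.card_insert_of_notMem (by simp [hab, hac, had]),
    Finset.card_insert_of_notMem (by simp [hbc, hbd]), Finset.card_pair hcd]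

lemma setOf_mem_pair (x y u v : V) :
    {w | w ∈ s(x,y) ∨ w ∈ s(u,v)} = ({x, y, u, v} : Set V) := by
  ext w
  simp only [Set.mem_setOf_eq, Sym2.mem_iff, Set.mem_insert_iff, Set.mem_singleton_iff]
  tauto

open scoped Classical in
lemma mem_badset_iff {G : SimpleGraph V} {s : Finset (Sym2 V)} :
    s ∈ badset G ↔ ∃ x y u v : V,
      x ≠ y ∧ x ≠ u ∧ x ≠ v ∧ y ≠ u ∧ y ≠ v ∧ u ≠ v ∧
      G.Adj x y ∧ G.Adj u v ∧ fourCycleOn G {x, y, u, v} ∧ s = {s(x,y), s(u,v)} := by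
  classical
  constructor
  · intro hs
    simp only [badset, Finset.mem_filter, Finset.mem_powersetCard] at hs
    obtain ⟨⟨hsub, hcard⟩, hbad⟩ := hs
    obtain ⟨e, f, hef, rfl⟩ := Finset.card_eq_two.mp hcard
    have heE : e ∈ G.edgeFinset := hsub (by simp)
    have hfE : f ∈ G.edgeFinset := hsub (by simp)
    have hep : ¬ epPair G e f := by
      push_neg at hbad
      obtain ⟨e', he', f', hf', hne, hnp⟩ := hbad
      simp only [Finset.mem_insert, Finset.mem_singleton] at he' hf'
      rcases he' with rfl | rfl <;> rcases hf' with rfl | rfl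
      · exact absurd rfl hne
      · exact hnp
      · exact fun h => hnp (epPair_comm.mp h)
      · exact absurd rfl hne
    have hdisj : ¬ ∃ w, w ∈ e ∧ w ∈ f := by
      intro hw; exact hep (Or.inl hw)
    have hfc : fourCycleOn G {w | w ∈ e ∨ w ∈ f} := by
      by_contra hnfc; exact hep (Or.inr ⟨hdisj, hnfc⟩)
    induction e using Sym2.ind with | _ x y =>
    induction f using Sym2.ind with | _ u v =>
    have haxy : G.Adj x y := by rwa [SimpleGraph.mem_edgeFinset, SimpleGraph.mem_edgeSet] at heE
    have hauv : G.Adj u v := by rwa [SimpleGraph.mem_edgeFinset, SimpleGraph.mem_edgeSet] at hfE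
    refine ⟨x, y, u, v, haxy.ne, ?_, ?_, ?_, ?_, hauv.ne, haxy, hauv, ?_, rfl⟩
    · rintro rfl; exact hdisj ⟨x, by simp, by simp⟩
    · rintro rfl; exact hdisj ⟨x, by simp, by simp⟩
    · rintro rfl; exact hdisj ⟨y, by simp, by simp⟩
    · rintro rfl; exact hdisj ⟨y, by simp, by simp⟩
    · rwa [setOf_mem_pair] at hfc
  · rintro ⟨x, y, u, v, hxy, hxu, hxv, hyu, hyv, huv, haxy, hauv, hfc, rfl⟩
    have hne : s(x,y) ≠ s(u,v) := by
      simp only [Ne, Sym2.eq_iff, not_or]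
      constructor <;> rintro ⟨rfl, rfl⟩
      · exact hxu rfl
      · exact hxv rfl
    simp only [badset, Finset.mem_filter, Finset.mem_powersetCard]
    refine ⟨⟨?_, ?_⟩, ?_⟩
    · intro e he
      simp only [Finset.mem_insert, Finset.mem_singleton] at he
      rcases he with rfl | rfl
      · exact SimpleGraph.mem_edgeFinset.mpr haxy
      · exact SimpleGraph.mem_edgeFinset.mpr hauv
    · exact Finset.card_pair hne
    · intro hall
      have := hall s(x,y) (by simp) s(u,v) (by simp) hne
      rcases this with ⟨w, hw1, hw2⟩ | ⟨_, hnfc⟩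
      · simp only [Sym2.mem_iff] at hw1 hw2
        rcases hw1 with rfl | rfl <;> rcases hw2 with rfl | rfl <;> tauto
      · rw [setOf_mem_pair] at hnfc; exact hnfc hfc

end Aux2

section Aux3

variable {V : Type*} [Fintype V] [DecidableEq V]

open scoped Classical in
lemma fiber_eq (G : SimpleGraph V) {t : Finset V} {a b c d : V}
    (ht : t = {a, b, c, d})
    (hab : a ≠ b) (hac : a ≠ c) (had : a ≠ d) (hbc : b ≠ c) (hbd : b ≠ d) (hcd : c ≠ d)
    (h4 : fourCycleOn G (t : Set V)) :
    (badset G).filter (fun s => endpts s = t) =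
      ({ {s(a,b), s(c,d)}, {s(a,c), s(b,d)}, {s(a,d), s(b,c)} } :
          Finset (Finset (Sym2 V))).filter (fun s => ∀ e ∈ s, e ∈ G.edgeSet) := by
  have hcoe : (t : Set V) = {a, b, c, d} := by rw [ht]; simp
  ext s
  simp only [Finset.mem_filter]
  constructor
  · rintro ⟨hs, hend⟩
    obtain ⟨x, y, u, v, hxy, hxu, hxv, hyu, hyv, huv, haxy, hauv, hfc, rfl⟩ :=
      mem_badset_iff.mp hs
    have hsub : ∀ e ∈ ({s(x,y), s(u,v)} : Finset (Sym2 V)), e ∈ G.edgeSet := by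
      intro e he
      simp only [Finset.mem_insert, Finset.mem_singleton] at he
      rcases he with rfl | rfl
      · exact (SimpleGraph.mem_edgeSet G).mpr haxy
      · exact (SimpleGraph.mem_edgeSet G).mpr hauv
    refine ⟨?_, hsub⟩
    rw [endpts_pair] at hend
    have := matching_cases hxy hxu hxv hyu hyv huv (hend.trans ht)
    simp only [Finset.mem_insert, Finset.mem_singleton]
    exact this
  · rintro ⟨hs, hsub⟩
    have hadj : ∀ p q : V, s(p, q) ∈ s → G.Adj p q := fun p q hp =>
      (SimpleGraph.mem_edgeSet G).mp (hsub _ hp)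
    simp only [Finset.mem_insert, Finset.mem_singleton] at hs
    rcases hs with rfl | rfl | rfl
    · refine ⟨mem_badset_iff.mpr ⟨a, b, c, d, hab, hac, had, hbc, hbd, hcd,
        hadj a b (by simp), hadj c d (by simp), by rwa [hcoe] at h4, rfl⟩, ?_⟩
      rw [endpts_pair, ht]
    · refine ⟨mem_badset_iff.mpr ⟨a, c, b, d, hac, hab, had, hbc.symm, hcd, hbd,
        hadj a c (by simp), hadj b d (by simp), ?_, rfl⟩, ?_⟩
      · have : ({a, c, b, d} : Set V) = {a, b, c, d} := by
          ext w; simp only [Set.mem_insert_iff, Set.mem_singleton_iff]; tauto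
        rw [this]; rwa [hcoe] at h4
      · rw [endpts_pair, ht]
        ext w; simp only [Finset.mem_insert, Finset.mem_singleton]; tauto
    · refine ⟨mem_badset_iff.mpr ⟨a, d, b, c, had, hab, hac, hbd.symm, hcd.symm, hbc,
        hadj a d (by simp), hadj b c (by simp), ?_, rfl⟩, ?_⟩
      · have : ({a, d, b, c} : Set V) = {a, b, c, d} := by
          ext w; simp only [Set.mem_insert_iff, Set.mem_singleton_iff]; tauto
        rw [this]; rwa [hcoe] at h4
      · rw [endpts_pair, ht]
        ext w; simp only [Finset.mem_insert, Finset.mem_singleton]; tauto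

open scoped Classical in
lemma fiber_eq_full (G : SimpleGraph V) {t : Finset V} {a b c d : V}
    (ht : t = {a, b, c, d})
    (hab : a ≠ b) (hac : a ≠ c) (had : a ≠ d) (hbc : b ≠ c) (hbd : b ≠ d) (hcd : c ≠ d)
    (h4 : fourCycleOn G (t : Set V))
    (e1 : G.Adj a b) (e2 : G.Adj c d) (e3 : G.Adj a c) (e4 : G.Adj b d)
    (e5 : G.Adj a d) (e6 : G.Adj b c) :
    (badset G).filter (fun s => endpts s = t) =
      ({ {s(a,b), s(c,d)}, {s(a,c), s(b,d)}, {s(a,d), s(b,c)} } :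
          Finset (Finset (Sym2 V))) := by
  rw [fiber_eq G ht hab hac had hbc hbd hcd h4]
  apply Finset.filter_true_of_mem
  intro s hs
  simp only [Finset.mem_insert, Finset.mem_singleton] at hs
  rcases hs with rfl | rfl | rfl <;>
    (intro e he; simp only [Finset.mem_insert, Finset.mem_singleton] at he;
     rcases he with rfl | rfl <;> rw [SimpleGraph.mem_edgeSet])
  exacts [e1, e2, e3, e4, e5, e6]

open scoped Classical in
lemma fiber_eq_two (G : SimpleGraph V) {t : Finset V} {a b c d : V}
    (ht : t = {a, b, c, d})
    (hab : a ≠ b) (hac : a ≠ c) (had : a ≠ d) (hbc : b ≠ c) (hbd : b ≠ d) (hcd : c ≠ d)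
    (h4 : fourCycleOn G (t : Set V))
    (e1 : ¬ G.Adj a b) (e3 : G.Adj a c) (e4 : G.Adj b d)
    (e5 : G.Adj a d) (e6 : G.Adj b c) :
    (badset G).filter (fun s => endpts s = t) =
      ({ {s(a,c), s(b,d)}, {s(a,d), s(b,c)} } : Finset (Finset (Sym2 V))) := by
  rw [fiber_eq G ht hab hac had hbc hbd hcd h4]
  rw [Finset.filter_insert, if_neg ?hM1, Finset.filter_insert, if_pos ?hM2,
    Finset.filter_singleton, if_pos ?hM3]
  case hM1 =>
    intro h
    have := h _ (Finset.mem_insert_self _ _)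
    rw [SimpleGraph.mem_edgeSet] at this
    exact e1 this
  case hM2 =>
    intro e he
    simp only [Finset.mem_insert, Finset.mem_singleton] at he
    rcases he with rfl | rfl <;> rw [SimpleGraph.mem_edgeSet]
    exacts [e3, e4]
  case hM3 =>
    intro e he
    simp only [Finset.mem_insert, Finset.mem_singleton] at he
    rcases he with rfl | rfl <;> rw [SimpleGraph.mem_edgeSet]
    exacts [e5, e6]

open scoped Classical in
lemma fiber_empty (G : SimpleGraph V) {t : Finset V}
    (h4 : ¬ fourCycleOn G (t : Set V)) :
    (badset G).filter (fun s => endpts s = t) = ∅ := by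
  rw [Finset.filter_eq_empty_iff]
  intro s hs hend
  obtain ⟨x, y, u, v, hxy, hxu, hxv, hyu, hyv, huv, _, _, hfc, rfl⟩ := mem_badset_iff.mp hs
  rw [endpts_pair] at hend
  apply h4
  have : (t : Set V) = {x, y, u, v} := by rw [← hend]; simp
  rw [this]; exact hfc

open scoped Classical in
lemma endpts_mem_P4 {G : SimpleGraph V} {s : Finset (Sym2 V)} (hs : s ∈ badset G) :
    endpts s ∈ (Finset.univ : Finset V).powersetCard 4 := by
  obtain ⟨x, y, u, v, hxy, hxu, hxv, hyu, hyv, huv, _, _, _, rfl⟩ := mem_badset_iff.mp hs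
  rw [Finset.mem_powersetCard_univ, endpts_pair]
  exact card_four hxy hxu hxv hyu hyv huv

lemma no_fourCycle (G : SimpleGraph V) {t : Finset V} (h4 : t.card = 4)
    {w z1 z2 : V} (hw : w ∈ t) (hz1 : z1 ∈ t) (hz2 : z2 ∈ t) (h12 : z1 ≠ z2)
    (hwz1 : w ≠ z1) (hwz2 : w ≠ z2)
    (na1 : ¬ G.Adj w z1) (na2 : ¬ G.Adj w z2) : ¬ fourCycleOn G (t : Set V) := by
  rintro ⟨a, b, c, d, ha, hb, hc, hd, hab, hac, had, hbc, hbd, hcd, a1, a2, a3, a4⟩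
  have hsub : ({a, b, c, d} : Finset V) ⊆ t := by
    intro z hz
    simp only [Finset.mem_insert, Finset.mem_singleton] at hz
    rcases hz with rfl | rfl | rfl | rfl <;> assumption
  have heq : ({a, b, c, d} : Finset V) = t :=
    Finset.eq_of_subset_of_card_le hsub (by rw [h4, card_four hab hac had hbc hbd hcd])
  -- every vertex has two distinct neighbours among t
  have key : ∀ z ∈ t, ∃ p q : V, p ∈ t ∧ q ∈ t ∧ p ≠ q ∧ G.Adj z p ∧ G.Adj z q := by
    intro z hz
    rw [← heq] at hz
    simp only [Finset.mem_insert, Finset.mem_singleton] at hz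
    rcases hz with rfl | rfl | rfl | rfl
    · exact ⟨b, d, heq ▸ (by simp), heq ▸ (by simp), hbd, a1, a4.symm⟩
    · exact ⟨a, c, heq ▸ (by simp), heq ▸ (by simp), hac, a1.symm, a2⟩
    · exact ⟨b, d, heq ▸ (by simp), heq ▸ (by simp), hbd, a2.symm, a3⟩
    · exact ⟨c, a, heq ▸ (by simp), heq ▸ (by simp), fun h => hac h.symm, a3.symm, a4⟩
  obtain ⟨p, q, hp, hq, hpq, hzp, hzq⟩ := key w hw
  -- p, q, z1, z2, w would give 5 distinct elements unless {p,q} meets {z1,z2}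
  have hpz1 : p ≠ z1 := fun h => na1 (h ▸ hzp)
  have hpz2 : p ≠ z2 := fun h => na2 (h ▸ hzp)
  have hqz1 : q ≠ z1 := fun h => na1 (h ▸ hzq)
  have hqz2 : q ≠ z2 := fun h => na2 (h ▸ hzq)
  have hwp : w ≠ p := (G.ne_of_adj hzp)
  have hwq : w ≠ q := (G.ne_of_adj hzq)
  have hsub5 : ({w, p, q, z1, z2} : Finset V) ⊆ t := by
    intro z hz
    simp only [Finset.mem_insert, Finset.mem_singleton] at hz
    rcases hz with rfl | rfl | rfl | rfl | rfl <;> assumption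
  have hcard5 : ({w, p, q, z1, z2} : Finset V).card = 5 := by
    rw [Finset.card_insert_of_notMem (by simp [hwp, hwq, hwz1, hwz2]),
      Finset.card_insert_of_notMem (by simp [hpq, hpz1, hpz2]),
      Finset.card_insert_of_notMem (by simp [hqz1, hqz2]), Finset.card_pair h12]
  have := Finset.card_le_card hsub5
  rw [hcard5, h4] at this
  omega

end Aux3

section Aux4

variable {V : Type*}

lemma exists_four [DecidableEq V] {t : Finset V} (h : t.card = 4) :
    ∃ a b c d : V, a ≠ b ∧ a ≠ c ∧ a ≠ d ∧ b ≠ c ∧ b ≠ d ∧ c ≠ d ∧ t = {a, b, c, d} := by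
  obtain ⟨a, ha⟩ := Finset.card_pos.mp (by omega : 0 < t.card)
  have h3 : (t.erase a).card = 3 := by rw [Finset.card_erase_of_mem ha, h]
  obtain ⟨b, c, d, hbc, hbd, hcd, he⟩ := Finset.card_eq_three.mp h3
  have hb : b ∈ t.erase a := by rw [he]; simp
  have hc : c ∈ t.erase a := by rw [he]; simp
  have hd : d ∈ t.erase a := by rw [he]; simp
  refine ⟨a, b, c, d, fun h' => (Finset.mem_erase.mp hb).1 h'.symm,
    fun h' => (Finset.mem_erase.mp hc).1 h'.symm,
    fun h' => (Finset.mem_erase.mp hd).1 h'.symm, hbc, hbd, hcd, ?_⟩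
  rw [← he, Finset.insert_erase ha]

lemma card_M3 [DecidableEq V] {a b c d : V}
    (hab : a ≠ b) (hac : a ≠ c) (had : a ≠ d) (hbc : b ≠ c) (hbd : b ≠ d) (hcd : c ≠ d) :
    ({ {s(a,b), s(c,d)}, {s(a,c), s(b,d)}, {s(a,d), s(b,c)} } :
        Finset (Finset (Sym2 V))).card = 3 := by
  have h12 : ({s(a,b), s(c,d)} : Finset (Sym2 V)) ≠ {s(a,c), s(b,d)} := by
    intro h
    have : s(a,b) ∈ ({s(a,c), s(b,d)} : Finset (Sym2 V)) := h ▸ (by simp)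
    simp only [Finset.mem_insert, Finset.mem_singleton, Sym2.eq_iff] at this
    tauto
  have h13 : ({s(a,b), s(c,d)} : Finset (Sym2 V)) ≠ {s(a,d), s(b,c)} := by
    intro h
    have : s(a,b) ∈ ({s(a,d), s(b,c)} : Finset (Sym2 V)) := h ▸ (by simp)
    simp only [Finset.mem_insert, Finset.mem_singleton, Sym2.eq_iff] at this
    tauto
  have h23 : ({s(a,c), s(b,d)} : Finset (Sym2 V)) ≠ {s(a,d), s(b,c)} := by
    intro h
    have : s(a,c) ∈ ({s(a,d), s(b,c)} : Finset (Sym2 V)) := h ▸ (by simp)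
    simp only [Finset.mem_insert, Finset.mem_singleton, Sym2.eq_iff] at this
    tauto
  rw [Finset.card_insert_of_notMem (by simp [h12, h13]), Finset.card_pair h23]

lemma card_filter_val (d : ℕ) (p : ℕ → Prop) [DecidablePred p] :
    ((Finset.univ : Finset (Fin d)).filter (fun v => p v.val)).card
      = ((Finset.range d).filter p).card := by
  calc ((Finset.univ : Finset (Fin d)).filter (fun v => p v.val)).card
      = (((Finset.univ : Finset (Fin d)).filter (fun v => p v.val)).map
          Fin.valEmbedding).card := (Finset.card_map _).symm
    _ = (((Finset.univ : Finset (Fin d)).map Fin.valEmbedding).filter p).card := by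
        rw [Finset.filter_map]; rfl
    _ = ((Finset.Iio d).filter p).card := by rw [Fin.map_valEmbedding_univ]
    _ = ((Finset.range d).filter p).card := by rw [Nat.Iio_eq_range]

lemma cast_choose_three (x : ℕ) : ((x.choose 3 : ℕ) : ℚ) = x * (x - 1) * (x - 2) / 6 := by
  induction x with
  | zero => norm_num
  | succ y ih =>
    rw [Nat.choose_succ_succ]
    push_cast
    rw [ih, Nat.cast_choose_two]
    push_cast
    ring

lemma cast_choose_four (x : ℕ) :
    ((x.choose 4 : ℕ) : ℚ) = x * (x - 1) * (x - 2) * (x - 3) / 24 := by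
  induction x with
  | zero => norm_num
  | succ y ih =>
    rw [Nat.choose_succ_succ]
    push_cast
    rw [ih, cast_choose_three]
    push_cast
    ring

open scoped Classical in
lemma badT (d : ℕ) :
    (badset (⊤ : SimpleGraph (Fin d))).card = 3 * d.choose 4 := by
  classical
  rw [Finset.card_eq_sum_card_fiberwise (fun s hs => endpts_mem_P4 hs)]
  rw [Finset.sum_congr rfl (fun t ht => ?_), Finset.sum_const, smul_eq_mul,
    Finset.card_powersetCard, Finset.card_univ, Fintype.card_fin, mul_comm]
  rw [Finset.mem_powersetCard_univ] at ht
  obtain ⟨a, b, c, d', hab, hac, had, hbc, hbd, hcd, ht4⟩ := exists_four ht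
  have h4 : fourCycleOn (⊤ : SimpleGraph (Fin d)) (t : Set (Fin d)) := by
    have hco : (t : Set (Fin d)) = {a, b, c, d'} := by rw [ht4]; simp
    rw [hco, fourCycleOn_quad _ hab hac had hbc hbd hcd]
    exact Or.inl ⟨hab, hbc, hcd, fun h => had h.symm⟩
  rw [fiber_eq_full _ ht4 hab hac had hbc hbd hcd h4 hab hcd hac hbd had hbc]
  exact card_M3 hab hac had hbc hbd hcd

end Aux4

section Graph

lemma G_adj (d m n : ℕ) (x y : Fin d) :
    ((⊤ : SimpleGraph (Fin d)) \ bip d m n).Adj x y ↔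
      x ≠ y ∧ ¬(((x : ℕ) < m ∧ m ≤ (y : ℕ) ∧ (y : ℕ) < m + n) ∨
        ((y : ℕ) < m ∧ m ≤ (x : ℕ) ∧ (x : ℕ) < m + n)) := by
  simp only [SimpleGraph.sdiff_adj, SimpleGraph.top_adj]
  rfl

lemma bip_card_edges (d m n : ℕ) (hmn : m + n ≤ d) [Fintype (bip d m n).edgeSet] :
    (bip d m n).edgeFinset.card = m * n := by
  classical
  have hmem : ∀ x y : Fin d, (bip d m n).Adj x y ↔
      (((x : ℕ) < m ∧ m ≤ (y : ℕ) ∧ (y : ℕ) < m + n) ∨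
        ((y : ℕ) < m ∧ m ≤ (x : ℕ) ∧ (x : ℕ) < m + n)) := fun x y => Iff.rfl
  have := Finset.card_bij
    (fun (z : Fin d × Fin d) (_ : z ∈ (Finset.univ.filter (fun v : Fin d => (v : ℕ) < m)) ×ˢ
        (Finset.univ.filter (fun v : Fin d => m ≤ (v : ℕ) ∧ (v : ℕ) < m + n)))
      => s(z.1, z.2)) ?hi ?inj ?surj (t := (bip d m n).edgeFinset)
  · rw [← this, Finset.card_product, card_filter_val d (fun v => v < m),
      card_filter_val d (fun v => m ≤ v ∧ v < m + n)]
    have h1 : (Finset.range d).filter (fun v => v < m) = Finset.range m := by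
      ext z; simp [Finset.mem_range]; omega
    have h2 : (Finset.range d).filter (fun v => m ≤ v ∧ v < m + n) = Finset.Ico m (m+n) := by
      ext z; simp [Finset.mem_range, Finset.mem_Ico]; omega
    rw [h1, h2, Finset.card_range, Nat.card_Ico, Nat.add_sub_cancel_left]
  case hi =>
    intro z hz
    simp only [Finset.mem_product, Finset.mem_filter, Finset.mem_univ, true_and] at hz
    rw [SimpleGraph.mem_edgeFinset, SimpleGraph.mem_edgeSet, hmem]
    exact Or.inl ⟨hz.1, hz.2⟩
  case inj =>
    intro z hz z' hz' heq
    simp only [Finset.mem_product, Finset.mem_filter, Finset.mem_univ, true_and] at hz hz'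
    rw [Sym2.eq_iff] at heq
    rcases heq with ⟨h1, h2⟩ | ⟨h1, h2⟩
    · exact Prod.ext h1 h2
    · exfalso
      have := hz.1
      have := hz'.2
      rw [← h1] at *
      omega
  case surj =>
    intro e he
    induction e using Sym2.ind with | _ x y =>
    rw [SimpleGraph.mem_edgeFinset, SimpleGraph.mem_edgeSet, hmem] at he
    rcases he with ⟨h1, h2, h3⟩ | ⟨h1, h2, h3⟩
    · refine ⟨(x, y), Finset.mem_product.mpr ⟨?_, ?_⟩, rfl⟩
      · exact Finset.mem_filter.mpr ⟨Finset.mem_univ _, h1⟩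
      · exact Finset.mem_filter.mpr ⟨Finset.mem_univ _, h2, h3⟩
    · refine ⟨(y, x), Finset.mem_product.mpr ⟨?_, ?_⟩, Sym2.eq_swap⟩
      · exact Finset.mem_filter.mpr ⟨Finset.mem_univ _, h1⟩
      · exact Finset.mem_filter.mpr ⟨Finset.mem_univ _, h2, h3⟩

end Graph

section BadG

lemma Qextract {D m n : ℕ} {t : Finset (Fin D)} (ht : t.card = 4)
    (hA : (t.filter (fun v => v.val < m)).card = 1)
    (hB : (t.filter (fun v => m ≤ v.val ∧ v.val < m + n)).card = 1) :
    ∃ x y u v : Fin D, ((x : ℕ) < m) ∧ (m ≤ (y : ℕ) ∧ (y : ℕ) < m + n) ∧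
      (¬ (u : ℕ) < m ∧ ¬(m ≤ (u : ℕ) ∧ (u : ℕ) < m + n)) ∧
      (¬ (v : ℕ) < m ∧ ¬(m ≤ (v : ℕ) ∧ (v : ℕ) < m + n)) ∧
      x ≠ y ∧ x ≠ u ∧ x ≠ v ∧ y ≠ u ∧ y ≠ v ∧ u ≠ v ∧ t = {x, y, u, v} := by
  classical
  obtain ⟨x, hx⟩ := Finset.card_eq_one.mp hA
  obtain ⟨y, hy⟩ := Finset.card_eq_one.mp hB
  have hxt : x ∈ t ∧ (x : ℕ) < m := by
    have : x ∈ t.filter (fun v => v.val < m) := by rw [hx]; simp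
    simpa [Finset.mem_filter] using this
  have hyt : y ∈ t ∧ m ≤ (y : ℕ) ∧ (y : ℕ) < m + n := by
    have : y ∈ t.filter (fun v => m ≤ v.val ∧ v.val < m + n) := by rw [hy]; simp
    simpa [Finset.mem_filter] using this
  have hxy : x ≠ y := by
    intro h
    have h1 := hxt.2
    have h2 := hyt.2
    rw [h] at h1
    omega
  have hsub : ({x, y} : Finset (Fin D)) ⊆ t := by
    intro z hz
    simp only [Finset.mem_insert, Finset.mem_singleton] at hz
    rcases hz with rfl | rfl
    exacts [hxt.1, hyt.1]
  have hsd : (t \ {x, y}).card = 2 := by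
    rw [Finset.card_sdiff_of_subset hsub, ht, Finset.card_pair hxy]
  obtain ⟨u, v, huv, huvE⟩ := Finset.card_eq_two.mp hsd
  have hu : u ∈ t ∧ u ≠ x ∧ u ≠ y := by
    have : u ∈ t \ {x, y} := by rw [huvE]; simp
    simpa [Finset.mem_sdiff, not_or] using this
  have hv : v ∈ t ∧ v ≠ x ∧ v ≠ y := by
    have : v ∈ t \ {x, y} := by rw [huvE]; simp
    simpa [Finset.mem_sdiff, not_or] using this
  have huA : ¬ (u : ℕ) < m := by
    intro h
    have : u ∈ t.filter (fun v => v.val < m) := Finset.mem_filter.mpr ⟨hu.1, h⟩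
    rw [hx] at this
    exact hu.2.1 (Finset.mem_singleton.mp this)
  have huB : ¬ (m ≤ (u : ℕ) ∧ (u : ℕ) < m + n) := by
    intro h
    have : u ∈ t.filter (fun v => m ≤ v.val ∧ v.val < m + n) :=
      Finset.mem_filter.mpr ⟨hu.1, h⟩
    rw [hy] at this
    exact hu.2.2 (Finset.mem_singleton.mp this)
  have hvA : ¬ (v : ℕ) < m := by
    intro h
    have : v ∈ t.filter (fun w => w.val < m) := Finset.mem_filter.mpr ⟨hv.1, h⟩
    rw [hx] at this
    exact hv.2.1 (Finset.mem_singleton.mp this)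
  have hvB : ¬ (m ≤ (v : ℕ) ∧ (v : ℕ) < m + n) := by
    intro h
    have : v ∈ t.filter (fun w => m ≤ w.val ∧ w.val < m + n) :=
      Finset.mem_filter.mpr ⟨hv.1, h⟩
    rw [hy] at this
    exact hv.2.2 (Finset.mem_singleton.mp this)
  refine ⟨x, y, u, v, hxt.2, hyt.2, ⟨huA, huB⟩, ⟨hvA, hvB⟩, hxy,
    fun h => hu.2.1 h.symm, fun h => hv.2.1 h.symm,
    fun h => hu.2.2 h.symm, fun h => hv.2.2 h.symm, huv, ?_⟩
  ext z
  simp only [Finset.mem_insert, Finset.mem_singleton]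
  constructor
  · intro hz
    by_cases h1 : z = x
    · tauto
    by_cases h2 : z = y
    · tauto
    have : z ∈ t \ {x, y} := Finset.mem_sdiff.mpr ⟨hz, by simp [h1, h2]⟩
    rw [huvE] at this
    simp only [Finset.mem_insert, Finset.mem_singleton] at this
    tauto
  · rintro (rfl | rfl | rfl | rfl)
    exacts [hxt.1, hyt.1, hu.1, hv.1]

end BadG

section BadG2

lemma step2 {D m n : ℕ} {t : Finset (Fin D)} (ht : t.card = 4) :
    ((badset ((⊤ : SimpleGraph (Fin D)) \ bip D m n)).filter
        (fun s => endpts s = t)).card =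
      (if (t.filter (fun v => v.val < m)).card = 0 ∨
          (t.filter (fun v => m ≤ v.val ∧ v.val < m + n)).card = 0 then 3 else 0) +
      (if (t.filter (fun v => v.val < m)).card = 1 ∧
          (t.filter (fun v => m ≤ v.val ∧ v.val < m + n)).card = 1 then 2 else 0) := by
  classical
  set G := (⊤ : SimpleGraph (Fin D)) \ bip D m n with hG
  have hadj : ∀ x y : Fin D, G.Adj x y ↔ x ≠ y ∧
      ¬((x.val < m ∧ m ≤ y.val ∧ y.val < m + n) ∨
        (y.val < m ∧ m ≤ x.val ∧ x.val < m + n)) := fun x y => G_adj D m n x y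
  by_cases hP : (t.filter (fun v => v.val < m)).card = 0 ∨
      (t.filter (fun v => m ≤ v.val ∧ v.val < m + n)).card = 0
  · have hnocross : ∀ x ∈ t, ∀ y ∈ t, x ≠ y → G.Adj x y := by
      intro x hx y hy hne
      rw [hadj]
      refine ⟨hne, ?_⟩
      rcases hP with h0 | h0 <;>
        rw [Finset.card_eq_zero, Finset.filter_eq_empty_iff] at h0
      · rintro (⟨h1, h2⟩ | ⟨h1, h2⟩)
        exacts [h0 hx h1, h0 hy h1]
      · rintro (⟨h1, h2⟩ | ⟨h1, h2⟩)
        exacts [h0 hy h2, h0 hx h2]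
    obtain ⟨a, b, c, d, hab, hac, had, hbc, hbd, hcd, ht4⟩ := exists_four ht
    have ha : a ∈ t := by rw [ht4]; simp
    have hb : b ∈ t := by rw [ht4]; simp
    have hc : c ∈ t := by rw [ht4]; simp
    have hd : d ∈ t := by rw [ht4]; simp
    have h4 : fourCycleOn G (t : Set (Fin D)) := by
      have hco : (t : Set (Fin D)) = {a, b, c, d} := by rw [ht4]; simp
      rw [hco, fourCycleOn_quad G hab hac had hbc hbd hcd]
      exact Or.inl ⟨hnocross a ha b hb hab, hnocross b hb c hc hbc,
        hnocross c hc d hd hcd, hnocross d hd a ha (fun h => had h.symm)⟩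
    rw [fiber_eq_full G ht4 hab hac had hbc hbd hcd h4
      (hnocross a ha b hb hab) (hnocross c hc d hd hcd) (hnocross a ha c hc hac)
      (hnocross b hb d hd hbd) (hnocross a ha d hd had) (hnocross b hb c hc hbc)]
    rw [card_M3 hab hac had hbc hbd hcd, if_pos hP,
      if_neg (by rintro ⟨h1, h2⟩; rcases hP with h | h <;> omega)]
  · by_cases hQ : (t.filter (fun v => v.val < m)).card = 1 ∧
        (t.filter (fun v => m ≤ v.val ∧ v.val < m + n)).card = 1
    · obtain ⟨x, y, u, v, hxA, hyB, huO, hvO, hxy, hxu, hxv, hyu, hyv, huv, ht4⟩ :=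
        Qextract ht hQ.1 hQ.2
      have hnxy : ¬ G.Adj x y := by
        rw [hadj]
        rintro ⟨-, hno⟩
        exact hno (Or.inl ⟨hxA, hyB⟩)
      have haxu : G.Adj x u :=
        (hadj x u).mpr ⟨hxu, by rintro (⟨h1, h2⟩ | ⟨h1, h2⟩) <;> omega⟩
      have haxv : G.Adj x v :=
        (hadj x v).mpr ⟨hxv, by rintro (⟨h1, h2⟩ | ⟨h1, h2⟩) <;> omega⟩
      have hayu : G.Adj y u :=
        (hadj y u).mpr ⟨hyu, by rintro (⟨h1, h2⟩ | ⟨h1, h2⟩) <;> omega⟩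
      have hayv : G.Adj y v :=
        (hadj y v).mpr ⟨hyv, by rintro (⟨h1, h2⟩ | ⟨h1, h2⟩) <;> omega⟩
      have hauv : G.Adj u v :=
        (hadj u v).mpr ⟨huv, by rintro (⟨h1, h2⟩ | ⟨h1, h2⟩) <;> omega⟩
      have h4 : fourCycleOn G (t : Set (Fin D)) := by
        have hco : (t : Set (Fin D)) = {x, y, u, v} := by rw [ht4]; simp
        rw [hco, fourCycleOn_quad G hxy hxu hxv hyu hyv huv]
        exact Or.inr (Or.inr ⟨haxu, hayu.symm, hayv, haxv.symm⟩)
      rw [fiber_eq_two G ht4 hxy hxu hxv hyu hyv huv h4 hnxy haxu hayv haxv hayu]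
      have hM23 : ({s(x,u), s(y,v)} : Finset (Sym2 (Fin D))) ≠ {s(x,v), s(y,u)} := by
        intro h
        have : s(x,u) ∈ ({s(x,v), s(y,u)} : Finset (Sym2 (Fin D))) := h ▸ (by simp)
        simp only [Finset.mem_insert, Finset.mem_singleton, Sym2.eq_iff] at this
        tauto
      rw [Finset.card_pair hM23, if_neg hP, if_pos hQ]
    · have hempty : ¬ fourCycleOn G (t : Set (Fin D)) := by
        obtain ⟨hP1, hP2⟩ := not_or.mp hP
        have h2 : 2 ≤ (t.filter (fun v => v.val < m)).card ∨
            2 ≤ (t.filter (fun v => m ≤ v.val ∧ v.val < m + n)).card := by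
          by_contra hco
          push_neg at hco
          obtain ⟨hc1, hc2⟩ := hco
          have hA1 : (t.filter (fun v => v.val < m)).card = 1 := by omega
          have hB1 : (t.filter (fun v => m ≤ v.val ∧ v.val < m + n)).card = 1 := by omega
          exact hQ ⟨hA1, hB1⟩
        rcases h2 with h2 | h2
        · obtain ⟨a1, ha1, a2, ha2, h12⟩ := Finset.one_lt_card.mp
            (by omega : 1 < (t.filter (fun v => v.val < m)).card)
          obtain ⟨y0, hy0⟩ := Finset.card_pos.mp
            (by omega : 0 < (t.filter (fun v => m ≤ v.val ∧ v.val < m + n)).card)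
          simp only [Finset.mem_filter] at ha1 ha2 hy0
          refine no_fourCycle G ht hy0.1 ha1.1 ha2.1 h12 ?_ ?_ ?_ ?_
          · intro h; rw [h] at hy0; have := hy0.2; have := ha1.2; omega
          · intro h; rw [h] at hy0; have := hy0.2; have := ha2.2; omega
          · intro hadj'
            exact ((hadj _ _).mp hadj').2 (Or.inr ⟨ha1.2, hy0.2⟩)
          · intro hadj'
            exact ((hadj _ _).mp hadj').2 (Or.inr ⟨ha2.2, hy0.2⟩)
        · obtain ⟨b1, hb1, b2, hb2, h12⟩ := Finset.one_lt_card.mp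
            (by omega : 1 < (t.filter (fun v => m ≤ v.val ∧ v.val < m + n)).card)
          obtain ⟨x0, hx0⟩ := Finset.card_pos.mp
            (by omega : 0 < (t.filter (fun v => v.val < m)).card)
          simp only [Finset.mem_filter] at hb1 hb2 hx0
          refine no_fourCycle G ht hx0.1 hb1.1 hb2.1 h12 ?_ ?_ ?_ ?_
          · intro h; rw [h] at hx0; have := hx0.2; have := hb1.2; omega
          · intro h; rw [h] at hx0; have := hx0.2; have := hb2.2; omega
          · intro hadj'
            exact ((hadj _ _).mp hadj').2 (Or.inl ⟨hx0.2, hb1.2⟩)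
          · intro hadj'
            exact ((hadj _ _).mp hadj').2 (Or.inl ⟨hx0.2, hb2.2⟩)
      rw [fiber_empty G hempty, Finset.card_empty, if_neg hP, if_neg hQ]

end BadG2

section BadG3

open scoped Classical in
lemma badG (m n k : ℕ) :
    (badset ((⊤ : SimpleGraph (Fin (m+n+k))) \ bip (m+n+k) m n)).card + 3 * k.choose 4
      = 3 * (n+k).choose 4 + 3 * (m+k).choose 4 + 2 * (m * (n * k.choose 2)) := by
  classical
  set D := m + n + k with hD
  rw [Finset.card_eq_sum_card_fiberwise
      (f := endpts) (t := (Finset.univ : Finset (Fin D)).powersetCard 4)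
      (fun s hs => endpts_mem_P4 hs)]
  rw [Finset.sum_congr rfl
      (fun t ht => step2 (m := m) (n := n) (Finset.mem_powersetCard_univ.mp ht))]
  rw [Finset.sum_add_distrib, ← Finset.sum_filter, ← Finset.sum_filter,
    Finset.sum_const, Finset.sum_const, smul_eq_mul, smul_eq_mul]
  -- cardinalities of the vertex classes
  have hcard1 : ((Finset.univ : Finset (Fin D)).filter (fun v => ¬ v.val < m)).card
      = n + k := by
    rw [card_filter_val D (fun v => ¬ v < m)]
    have h : (Finset.range D).filter (fun v => ¬ v < m) = Finset.Ico m D := by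
      ext z; simp [Finset.mem_Ico]; omega
    rw [h, Nat.card_Ico]; omega
  have hcard2 : ((Finset.univ : Finset (Fin D)).filter
      (fun v => ¬(m ≤ v.val ∧ v.val < m + n))).card = m + k := by
    rw [card_filter_val D (fun v => ¬(m ≤ v ∧ v < m + n))]
    have h : (Finset.range D).filter (fun v => ¬(m ≤ v ∧ v < m + n))
        = Finset.range m ∪ Finset.Ico (m+n) D := by
      ext z; simp [Finset.mem_Ico, Finset.mem_range]; omega
    rw [h, Finset.card_union_of_disjoint (by
      rw [Finset.disjoint_left]; intro z hz1 hz2;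
      simp only [Finset.mem_range] at hz1
      simp only [Finset.mem_Ico] at hz2
      omega)]
    rw [Finset.card_range, Nat.card_Ico]; omega
  have hcard3 : ((Finset.univ : Finset (Fin D)).filter
      (fun v => ¬ v.val < m ∧ ¬(m ≤ v.val ∧ v.val < m + n))).card = k := by
    rw [card_filter_val D (fun v => ¬ v < m ∧ ¬(m ≤ v ∧ v < m + n))]
    have h : (Finset.range D).filter (fun v => ¬ v < m ∧ ¬(m ≤ v ∧ v < m + n))
        = Finset.Ico (m+n) D := by
      ext z; simp [Finset.mem_Ico, Finset.mem_range]; omega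
    rw [h, Nat.card_Ico]; omega
  have hcardA : ((Finset.univ : Finset (Fin D)).filter (fun v => v.val < m)).card = m := by
    rw [card_filter_val D (fun v => v < m)]
    have h : (Finset.range D).filter (fun v => v < m) = Finset.range m := by
      ext z; simp [Finset.mem_range]; omega
    rw [h, Finset.card_range]
  have hcardB : ((Finset.univ : Finset (Fin D)).filter
      (fun v => m ≤ v.val ∧ v.val < m + n)).card = n := by
    rw [card_filter_val D (fun v => m ≤ v ∧ v < m + n)]
    have h : (Finset.range D).filter (fun v => m ≤ v ∧ v < m + n)
        = Finset.Ico m (m+n) := by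
      ext z; simp [Finset.mem_Ico, Finset.mem_range]; omega
    rw [h, Nat.card_Ico]; omega
  -- count of 4-sets avoiding A or avoiding B
  have hS1 : (((Finset.univ : Finset (Fin D)).powersetCard 4).filter
        (fun t => (t.filter (fun v => v.val < m)).card = 0 ∨
          (t.filter (fun v => m ≤ v.val ∧ v.val < m + n)).card = 0)).card + k.choose 4
      = (n+k).choose 4 + (m+k).choose 4 := by
    have e1 : ((Finset.univ : Finset (Fin D)).powersetCard 4).filter
          (fun t => (t.filter (fun v => v.val < m)).card = 0)
        = ((Finset.univ : Finset (Fin D)).filter (fun v => ¬ v.val < m)).powersetCard 4 := by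
      ext t
      simp only [Finset.mem_filter, Finset.mem_powersetCard_univ, Finset.mem_powersetCard,
        Finset.card_eq_zero, Finset.filter_eq_empty_iff, Finset.subset_iff,
        Finset.mem_filter, Finset.mem_univ, true_and]
      tauto
    have e2 : ((Finset.univ : Finset (Fin D)).powersetCard 4).filter
          (fun t => (t.filter (fun v => m ≤ v.val ∧ v.val < m + n)).card = 0)
        = ((Finset.univ : Finset (Fin D)).filter
            (fun v => ¬(m ≤ v.val ∧ v.val < m + n))).powersetCard 4 := by
      ext t
      simp only [Finset.mem_filter, Finset.mem_powersetCard_univ, Finset.mem_powersetCard,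
        Finset.card_eq_zero, Finset.filter_eq_empty_iff, Finset.subset_iff,
        Finset.mem_filter, Finset.mem_univ, true_and]
      tauto
    have e3 : ((Finset.univ : Finset (Fin D)).powersetCard 4).filter
          (fun t => (t.filter (fun v => v.val < m)).card = 0 ∧
            (t.filter (fun v => m ≤ v.val ∧ v.val < m + n)).card = 0)
        = ((Finset.univ : Finset (Fin D)).filter
            (fun v => ¬ v.val < m ∧ ¬(m ≤ v.val ∧ v.val < m + n))).powersetCard 4 := by
      ext t
      simp only [Finset.mem_filter, Finset.mem_powersetCard_univ, Finset.mem_powersetCard,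
        Finset.card_eq_zero, Finset.filter_eq_empty_iff, Finset.subset_iff,
        Finset.mem_filter, Finset.mem_univ, true_and]
      constructor
      · intro h
        exact ⟨fun z hz => ⟨h.2.1 hz, h.2.2 hz⟩, h.1.2⟩
      · intro h
        exact ⟨⟨fun z _ => trivial, h.2⟩, fun z hz => (h.1 hz).1, fun z hz => (h.1 hz).2⟩
    have hun := Finset.card_union_add_card_inter
      (((Finset.univ : Finset (Fin D)).powersetCard 4).filter
        (fun t => (t.filter (fun v => v.val < m)).card = 0))
      (((Finset.univ : Finset (Fin D)).powersetCard 4).filter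
        (fun t => (t.filter (fun v => m ≤ v.val ∧ v.val < m + n)).card = 0))
    rw [← Finset.filter_or, ← Finset.filter_and] at hun
    rw [e1, e2, e3, Finset.card_powersetCard, Finset.card_powersetCard,
      Finset.card_powersetCard, hcard1, hcard2, hcard3] at hun
    omega
  -- count of 4-sets with exactly one vertex in A and one in B
  have hS2 : (((Finset.univ : Finset (Fin D)).powersetCard 4).filter
        (fun t => (t.filter (fun v => v.val < m)).card = 1 ∧
          (t.filter (fun v => m ≤ v.val ∧ v.val < m + n)).card = 1)).card
      = m * (n * k.choose 2) := by
    set Af := (Finset.univ : Finset (Fin D)).filter (fun v => v.val < m) with hAf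
    set Bf := (Finset.univ : Finset (Fin D)).filter
      (fun v => m ≤ v.val ∧ v.val < m + n) with hBf
    set Of := (Finset.univ : Finset (Fin D)).filter
      (fun v => ¬ v.val < m ∧ ¬(m ≤ v.val ∧ v.val < m + n)) with hOf
    have himg : ((Finset.univ : Finset (Fin D)).powersetCard 4).filter
          (fun t => (t.filter (fun v => v.val < m)).card = 1 ∧
            (t.filter (fun v => m ≤ v.val ∧ v.val < m + n)).card = 1)
        = ((Af ×ˢ Bf) ×ˢ Of.powersetCard 2).image
            (fun z => insert z.1.1 (insert z.1.2 z.2)) := by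
      ext t
      constructor
      · intro htf
        simp only [Finset.mem_filter, Finset.mem_powersetCard_univ] at htf
        obtain ⟨ht4c, hQ1, hQ2⟩ := htf
        obtain ⟨x, y, u, v, hxA, hyB, huO, hvO, hxy, hxu, hxv, hyu, hyv, huv, ht4⟩ :=
          Qextract ht4c hQ1 hQ2
        refine Finset.mem_image.mpr ⟨((x, y), {u, v}), ?_, ?_⟩
        · simp only [Finset.mem_product, Finset.mem_powersetCard, hAf, hBf, hOf,
            Finset.mem_filter, Finset.mem_univ, true_and]
          refine ⟨⟨hxA, hyB⟩, ?_, Finset.card_pair huv⟩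
          intro z hz
          simp only [Finset.mem_insert, Finset.mem_singleton] at hz
          simp only [Finset.mem_filter, Finset.mem_univ, true_and]
          rcases hz with rfl | rfl
          exacts [huO, hvO]
        · rw [ht4]
      · intro htf
        obtain ⟨⟨⟨x, y⟩, r⟩, hz, rfl⟩ := Finset.mem_image.mp htf
        simp only [Finset.mem_product, Finset.mem_powersetCard, hAf, hBf, hOf,
          Finset.mem_filter, Finset.mem_univ, true_and] at hz
        obtain ⟨⟨hxA, hyB⟩, hrO, hr2⟩ := hz
        obtain ⟨u, v, huv, rfl⟩ := Finset.card_eq_two.mp hr2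
        have huO : ¬ u.val < m ∧ ¬(m ≤ u.val ∧ u.val < m + n) := by
          have := hrO (show u ∈ ({u, v} : Finset (Fin D)) by simp)
          simpa [Finset.mem_filter] using this
        have hvO : ¬ v.val < m ∧ ¬(m ≤ v.val ∧ v.val < m + n) := by
          have := hrO (show v ∈ ({u, v} : Finset (Fin D)) by simp)
          simpa [Finset.mem_filter] using this
        have hxy : x ≠ y := by intro h; rw [h] at hxA; omega
        have hxu : x ≠ u := by intro h; rw [h] at hxA; omega
        have hxv : x ≠ v := by intro h; rw [h] at hxA; omega
        have hyu : y ≠ u := by intro h; rw [h] at hyB; omega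
        have hyv : y ≠ v := by intro h; rw [h] at hyB; omega
        simp only [Finset.mem_filter, Finset.mem_powersetCard_univ]
        refine ⟨card_four hxy hxu hxv hyu hyv huv, ?_, ?_⟩
        · have h : ({x, y, u, v} : Finset (Fin D)).filter (fun w => w.val < m) = {x} := by
            ext z
            simp only [Finset.mem_filter, Finset.mem_insert, Finset.mem_singleton]
            constructor
            · rintro ⟨rfl | rfl | rfl | rfl, h2⟩ <;> first | rfl | omega
            · rintro rfl; exact ⟨Or.inl rfl, hxA⟩
          rw [show insert x (insert y ({u, v} : Finset (Fin D))) = {x, y, u, v} from rfl,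
            h, Finset.card_singleton]
        · have h : ({x, y, u, v} : Finset (Fin D)).filter
              (fun w => m ≤ w.val ∧ w.val < m + n) = {y} := by
            ext z
            simp only [Finset.mem_filter, Finset.mem_insert, Finset.mem_singleton]
            constructor
            · rintro ⟨rfl | rfl | rfl | rfl, h2⟩ <;> first | rfl | omega
            · rintro rfl; exact ⟨Or.inr (Or.inl rfl), hyB⟩
          rw [show insert x (insert y ({u, v} : Finset (Fin D))) = {x, y, u, v} from rfl,
            h, Finset.card_singleton]
    have hinj : Set.InjOn (fun z : (Fin D × Fin D) × Finset (Fin D) =>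
        insert z.1.1 (insert z.1.2 z.2))
        ((((Af ×ˢ Bf) ×ˢ Of.powersetCard 2 :
            Finset ((Fin D × Fin D) × Finset (Fin D))) : Set _)) := by
      rintro ⟨⟨x, y⟩, r⟩ hz ⟨⟨x', y'⟩, r'⟩ hz' heq
      simp only [Finset.mem_coe, Finset.mem_product, hAf, hBf, hOf, Finset.mem_filter,
        Finset.mem_univ, true_and, Finset.mem_powersetCard] at hz hz'
      obtain ⟨⟨hx, hy⟩, hr⟩ := hz
      obtain ⟨⟨hx', hy'⟩, hr'⟩ := hz'
      simp only at heq
      have hrO : ∀ z ∈ r, ¬ z.val < m ∧ ¬(m ≤ z.val ∧ z.val < m + n) := by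
        intro z hz
        have := hr.1 hz
        simpa [Finset.mem_filter] using this
      have hrO' : ∀ z ∈ r', ¬ z.val < m ∧ ¬(m ≤ z.val ∧ z.val < m + n) := by
        intro z hz
        have := hr'.1 hz
        simpa [Finset.mem_filter] using this
      have hxx : x' = x := by
        have hmem : x' ∈ insert x (insert y r) := by rw [heq]; simp
        simp only [Finset.mem_insert] at hmem
        rcases hmem with h | h | h
        · exact h
        · exfalso; rw [h] at hx'; omega
        · exfalso; exact (hrO _ h).1 hx'
      have hyy : y' = y := by
        have hmem : y' ∈ insert x (insert y r) := by rw [heq]; simp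
        simp only [Finset.mem_insert] at hmem
        rcases hmem with h | h | h
        · exfalso; rw [h] at hy'; omega
        · exact h
        · exfalso; exact (hrO _ h).2 hy'
      rw [hxx, hyy] at heq
      have hrr : r = r' := by
        ext z
        constructor
        · intro hzr
          have hzmem : z ∈ insert x (insert y r') := by rw [← heq]; simp [hzr]
          simp only [Finset.mem_insert] at hzmem
          rcases hzmem with h | h | h
          · exfalso; rw [h] at hzr; exact (hrO _ hzr).1 hx
          · exfalso; rw [h] at hzr; exact (hrO _ hzr).2 hy
          · exact h
        · intro hzr
          have hzmem : z ∈ insert x (insert y r) := by rw [heq]; simp [hzr]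
          simp only [Finset.mem_insert] at hzmem
          rcases hzmem with h | h | h
          · exfalso; rw [h] at hzr; exact (hrO' _ hzr).1 hx
          · exfalso; rw [h] at hzr; exact (hrO' _ hzr).2 hy
          · exact h
      rw [hxx, hyy, hrr]
    rw [himg, Finset.card_image_of_injOn hinj, Finset.card_product, Finset.card_product,
      Finset.card_powersetCard]
    rw [hcardA, hcardB, hcard3, mul_assoc]
  rw [hS2]
  omega

end BadG3

section Final

open scoped Classical in
lemma eps_top (d : ℕ) :
    epsilon (⊤ : SimpleGraph (Fin d)) + 3 * d.choose 4 = (d.choose 2).choose 2 := by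
  classical
  have h := epsilon_add_badset (⊤ : SimpleGraph (Fin d))
  rw [badT, SimpleGraph.card_edgeFinset_top_eq_card_choose_two, Fintype.card_fin] at h
  exact h

open scoped Classical in
lemma eps_G (m n k : ℕ) :
    epsilon ((⊤ : SimpleGraph (Fin (m+n+k))) \ bip (m+n+k) m n)
        + (3 * (n+k).choose 4 + 3 * (m+k).choose 4 + 2 * (m * (n * k.choose 2)))
      = ((m+n+k).choose 2 - m * n).choose 2 + 3 * k.choose 4 := by
  classical
  have h := epsilon_add_badset ((⊤ : SimpleGraph (Fin (m+n+k))) \ bip (m+n+k) m n)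
  have hb := badG m n k
  rw [SimpleGraph.edgeFinset_sdiff, Finset.card_sdiff_of_subset
      (SimpleGraph.edgeFinset_mono le_top),
    SimpleGraph.card_edgeFinset_top_eq_card_choose_two, Fintype.card_fin,
    bip_card_edges (m+n+k) m n (by omega)] at h
  omega

lemma mn_le_choose (m n k : ℕ) : m * n ≤ (m+n+k).choose 2 := by
  classical
  have h1 : (bip (m+n+k) m n).edgeFinset.card ≤
      (⊤ : SimpleGraph (Fin (m+n+k))).edgeFinset.card :=
    Finset.card_le_card (SimpleGraph.edgeFinset_mono le_top)
  rw [bip_card_edges (m+n+k) m n (by omega),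
    SimpleGraph.card_edgeFinset_top_eq_card_choose_two, Fintype.card_fin] at h1
  exact h1

end Final


open scoped Classical in
theorem epsilon_complete_minus_bipartite (d m n : ℕ) (hm : 1 ≤ m) (hn : 1 ≤ n)
    (hmn : m + n ≤ d) :
    (epsilon ((⊤ : SimpleGraph (Fin d)) \ bip d m n) : ℚ)
      - (epsilon (⊤ : SimpleGraph (Fin d)) : ℚ)
    = (1 / 2) * m * n * ((m : ℚ) + n - 6) * d
      - (1 / 4) * m * n * (3 * (m : ℚ) * n + 2 * (m : ℚ) ^ 2 + 2 * (n : ℚ) ^ 2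
          - 5 * m - 5 * n - 13) := by
  obtain ⟨k, rfl⟩ : ∃ k, d = m + n + k := ⟨d - (m + n), by omega⟩
  have hT := eps_top (m + n + k)
  have hG := eps_G m n k
  have hle := mn_le_choose m n k
  have cT : (epsilon (⊤ : SimpleGraph (Fin (m+n+k))) : ℚ)
      = (((m+n+k).choose 2).choose 2 : ℕ) - 3 * ((m+n+k).choose 4 : ℕ) := by
    have h := congrArg (fun x : ℕ => (x : ℚ)) hT
    push_cast at h
    linarith
  have cG : (epsilon ((⊤ : SimpleGraph (Fin (m+n+k))) \ bip (m+n+k) m n) : ℚ)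
      = ((((m+n+k).choose 2 - m * n).choose 2 : ℕ) : ℚ) + 3 * ((k.choose 4 : ℕ) : ℚ)
        - 3 * (((n+k).choose 4 : ℕ) : ℚ) - 3 * (((m+k).choose 4 : ℕ) : ℚ)
        - 2 * ((m : ℚ) * ((n : ℚ) * ((k.choose 2 : ℕ) : ℚ))) := by
    have h := congrArg (fun x : ℕ => (x : ℚ)) hG
    push_cast at h
    linarith
  rw [cT, cG]
  simp only [Nat.cast_choose_two, cast_choose_four, Nat.cast_sub hle, Nat.cast_mul,
    Nat.cast_add]
  push_cast
  ring
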